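/- For a hook shape λ = (a, 1^b) with a ≥ 1, b ≥ 0, and any flag n = (n_1 ≤ n_2 ≤ ... ≤ n_l) with l = b+1, the noncommutative column flagged Schur function J_λ^n is congruent modulo I_RKst to the sum of column reading words of all semistandard Young tableaux of shape λ' with distinct entries whose column-c entries lie in [n_c]. In particular 𝔍_{(a,1^b)'}(u) is a positive sum of monomials in U/I_RKst. -/

import Mathlib

open scoped Classical

noncomputable section

/-- The monomial (word) `u_{l_1} u_{l_2} ⋯ u_{l_n}` in the free associative algebra
`U = ℤ⟨u_1, …, u_N⟩`, whose variables are indexed by `Fin N`. -/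
def word (N : ℕ) (l : List (Fin N)) : FreeAlgebra ℤ (Fin N) :=
  (l.map (FreeAlgebra.ι ℤ)).prod

/-- The generating relations of the two-sided ideal `I_RKst`:
`u_b (u_a u_c - u_c u_a) - (u_a u_c - u_c u_a) u_b = 0` for `a < b < c`, together with
`w = 0` for every word `w` with a repeated letter. -/
inductive RKRel (N : ℕ) : FreeAlgebra ℤ (Fin N) → FreeAlgebra ℤ (Fin N) → Prop
  | knuth_rotation (a b c : Fin N) (hab : a < b) (hbc : b < c) :
      RKRel N
        (FreeAlgebra.ι ℤ b *
            (FreeAlgebra.ι ℤ a * FreeAlgebra.ι ℤ c - FreeAlgebra.ι ℤ c * FreeAlgebra.ι ℤ a) -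
          (FreeAlgebra.ι ℤ a * FreeAlgebra.ι ℤ c - FreeAlgebra.ι ℤ c * FreeAlgebra.ι ℤ a) *
            FreeAlgebra.ι ℤ b)
        0
  | repeated (l : List (Fin N)) (h : ¬ l.Nodup) : RKRel N (word N l) 0

/-- The noncommutative elementary symmetric function
`e_d(u) = ∑_{N ≥ i_1 > i_2 > ⋯ > i_d ≥ 1} u_{i_1} ⋯ u_{i_d}` (so `e_0 = 1` and `e_d = 0`
for `d > N`). -/
def esym (N d : ℕ) : FreeAlgebra ℤ (Fin N) :=
  ∑ f : Fin d → Fin N, if StrictAnti f then word N (List.ofFn f) else 0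

/-- The canonical projection `U → U/I_RKst`. -/
def pr (N : ℕ) : FreeAlgebra ℤ (Fin N) →ₐ[ℤ] RingQuot (RKRel N) :=
  RingQuot.mkAlgHom ℤ (RKRel N)


/-- The flagged noncommutative elementary symmetric function
`e_d([m]) = ∑_{m ≥ i_1 > ⋯ > i_d ≥ 1} u_{i_1} ⋯ u_{i_d}` (letters `1, …, m` correspond to
indices `0, …, m-1` of `Fin N`). -/
def esymFlag (N m d : ℕ) : FreeAlgebra ℤ (Fin N) :=
  ∑ f : Fin d → Fin N,
    if StrictAnti f ∧ ∀ i, (f i : ℕ) < m then word N (List.ofFn f) else 0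

/-- `e_d([m])` with integer index: `e_d([m]) = 0` for `d < 0`. -/
def esymFlagZ (N m : ℕ) (d : ℤ) : FreeAlgebra ℤ (Fin N) :=
  if 0 ≤ d then esymFlag N m d.toNat else 0

/-- The noncommutative column flagged Schur function
`J_α^n = ∑_{π ∈ S_l} sgn(π) e_{α_1+π(1)-1}([n_1]) ⋯ e_{α_l+π(l)-l}([n_l])`. -/
def Jflag (N l : ℕ) (α : Fin l → ℤ) (n : Fin l → ℕ) : FreeAlgebra ℤ (Fin N) :=
  ∑ σ : Equiv.Perm (Fin l), ((Equiv.Perm.sign σ : ℤˣ) : ℤ) •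
    (List.ofFn fun k : Fin l =>
      esymFlagZ N (n k) (α k + ((σ k : ℕ) : ℤ) - ((k : ℕ) : ℤ))).prod

/-- The hook shape `λ = (a, 1^b)`, as a composition with `b+1` parts. -/
def hookComp (a b : ℕ) : Fin (b + 1) → ℤ := fun k => if (k : ℕ) = 0 then (a : ℤ) else 1

-- infrastructure lemmas
section Infra
variable {N : ℕ}

theorem word_nil : word N [] = 1 := rfl

theorem word_append (l₁ l₂ : List (Fin N)) :
    word N (l₁ ++ l₂) = word N l₁ * word N l₂ := by
  simp [word]

theorem pr_word_zero {l : List (Fin N)} (h : ¬ l.Nodup) : pr N (word N l) = 0 := by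
  have := RingQuot.mkAlgHom_rel ℤ (RKRel.repeated l h)
  simpa [pr] using this

theorem reverse_ofFn {α : Type*} {m : ℕ} (f : Fin m → α) :
    (List.ofFn f).reverse = List.ofFn (fun i => f i.rev) := by
  apply List.ext_getElem
  · simp
  · intro i h1 h2
    rw [List.getElem_reverse]
    simp only [List.getElem_ofFn]
    congr 1
    apply Fin.ext
    simp [Fin.rev]
    omega

end Infra
section Tools
variable {N : ℕ}

theorem pr_sum_normalize {ι : Type*} [Fintype ι] (C : ι → Prop) [∀ i, Decidable (C i)]
    (L : ι → List (Fin N)) :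
    pr N (∑ i, if C i then word N (L i) else 0) =
      ∑ i, if C i ∧ (L i).Nodup then pr N (word N (L i)) else 0 := by
  rw [map_sum]
  refine Finset.sum_congr rfl fun i _ => ?_
  by_cases hC : C i
  · by_cases hD : (L i).Nodup
    · simp [hC, hD]
    · simp [hC, hD, pr_word_zero hD]
  · simp [hC]

theorem pr_sum_eq_of_bij {ι κ : Type*} [Fintype ι] [Fintype κ]
    (C : ι → Prop) (D : κ → Prop) [∀ i, Decidable (C i)] [∀ k, Decidable (D k)]
    (L : ι → List (Fin N)) (M : κ → List (Fin N))
    (Φ : ι → κ) (Ψ : κ → ι)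
    (hΦ : ∀ i, C i → (L i).Nodup → D (Φ i) ∧ M (Φ i) = L i)
    (hΨ : ∀ k, D k → (M k).Nodup → C (Ψ k) ∧ L (Ψ k) = M k)
    (hΨΦ : ∀ i, C i → (L i).Nodup → Ψ (Φ i) = i)
    (hΦΨ : ∀ k, D k → (M k).Nodup → Φ (Ψ k) = k) :
    pr N (∑ i, if C i then word N (L i) else 0) =
      pr N (∑ k, if D k then word N (M k) else 0) := by
  rw [pr_sum_normalize, pr_sum_normalize, ← Finset.sum_filter, ← Finset.sum_filter]
  refine Finset.sum_bij' (fun i _ => Φ i) (fun k _ => Ψ k) ?_ ?_ ?_ ?_ ?_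
  · intro i hi
    simp only [Finset.mem_filter, Finset.mem_univ, true_and] at hi ⊢
    obtain ⟨h1, h2⟩ := hi
    obtain ⟨hD, hM⟩ := hΦ i h1 h2
    exact ⟨hD, hM ▸ h2⟩
  · intro k hk
    simp only [Finset.mem_filter, Finset.mem_univ, true_and] at hk ⊢
    obtain ⟨h1, h2⟩ := hk
    obtain ⟨hC, hL⟩ := hΨ k h1 h2
    exact ⟨hC, hL ▸ h2⟩
  · intro i hi
    simp only [Finset.mem_filter, Finset.mem_univ, true_and] at hi
    exact hΨΦ i hi.1 hi.2
  · intro k hk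
    simp only [Finset.mem_filter, Finset.mem_univ, true_and] at hk
    exact hΦΨ k hk.1 hk.2
  · intro i hi
    simp only [Finset.mem_filter, Finset.mem_univ, true_and] at hi
    rw [(hΦ i hi.1 hi.2).2]

end Tools
/-- Auxiliary: the tableau-sum target for the hook `(a,1^b)`. -/
def hookTarget (N a b : ℕ) (n : Fin (b + 1) → ℕ) : FreeAlgebra ℤ (Fin N) :=
  ∑ p : (Fin a → Fin N) × (Fin b → Fin N),
    if StrictMono p.1 ∧ StrictMono p.2 ∧ (∀ i j, p.1 i ≠ p.2 j) ∧
        (∀ (j : Fin b) (i : Fin a), (i : ℕ) = 0 → p.1 i < p.2 j) ∧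
        (∀ i, (p.1 i : ℕ) < n 0) ∧
        (∀ j : Fin b, (p.2 j : ℕ) < n j.succ)
    then word N ((List.ofFn p.1).reverse ++ List.ofFn p.2) else 0

theorem strictMono_fin_zero {α : Type*} [Preorder α] (g : Fin 0 → α) : StrictMono g :=
  fun i => i.elim0

theorem hook_base (N a : ℕ) (n : Fin 1 → ℕ) :
    pr N (Jflag N 1 (hookComp a 0) n) = pr N (hookTarget N a 0 n) := by
  have h1 : Jflag N 1 (hookComp a 0) n = esymFlag N (n 0) a := by
    rw [Jflag, Fintype.sum_unique]
    simp only [Equiv.Perm.sign_one, Units.val_one, Int.cast_one, one_smul,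
      List.ofFn_succ, List.ofFn_zero, List.prod_cons, List.prod_nil, mul_one]
    have h0 : (((default : Equiv.Perm (Fin 1)) 0 : Fin 1) : ℕ) = 0 := rfl
    have h2 : ((0 : Fin 1) : ℕ) = 0 := rfl
    rw [h0, h2]
    have h3 : hookComp a 0 0 + (0:ℕ) - (0:ℕ) = (a : ℤ) := by
      simp [hookComp]
    rw [h3]
    simp [esymFlagZ]
  rw [h1, esymFlag, hookTarget]
  refine pr_sum_eq_of_bij _ _ _ _
    (fun f : Fin a → Fin N =>
      ((fun i => f i.rev, fun i => i.elim0) : (Fin a → Fin N) × (Fin 0 → Fin N)))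
    (fun p : (Fin a → Fin N) × (Fin 0 → Fin N) => (fun i => p.1 i.rev : Fin a → Fin N))
    ?_ ?_ ?_ ?_
  · intro f hf _
    obtain ⟨hanti, hflag⟩ := hf
    refine ⟨⟨fun i j hij => hanti (Fin.rev_lt_rev.mpr hij), strictMono_fin_zero _,
      fun i j => j.elim0, fun j => j.elim0, fun i => hflag _, fun j => j.elim0⟩, ?_⟩
    rw [reverse_ofFn]
    simp [Fin.rev_rev, List.ofFn_zero]
  · intro p hp _
    obtain ⟨hmono, -, -, -, hflag, -⟩ := hp
    refine ⟨⟨fun i j hij => hmono (Fin.rev_lt_rev.mpr hij), fun i => hflag _⟩, ?_⟩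
    rw [reverse_ofFn]
    simp [List.ofFn_zero]
  · intro f _ _
    funext i
    simp [Fin.rev_rev]
  · intro p _ _
    refine Prod.ext ?_ (Subsingleton.elim _ _)
    funext i
    simp [Fin.rev_rev]
section Expand
open Equiv Equiv.Perm

theorem esymFlag_zero (N m : ℕ) : esymFlag N m 0 = 1 := by
  rw [esymFlag, Fintype.sum_unique]
  have h1 : StrictAnti (default : Fin 0 → Fin N) := fun i => i.elim0
  have h2 : ∀ i : Fin 0, ((default : Fin 0 → Fin N) i : ℕ) < m := fun i => i.elim0
  rw [if_pos ⟨h1, h2⟩]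
  simp [word]

theorem decomposeFin_inv_zero {m : ℕ} (e : Equiv.Perm (Fin m)) :
    (Equiv.Perm.decomposeFin.symm (0, e))⁻¹ = Equiv.Perm.decomposeFin.symm (0, e⁻¹) := by
  apply inv_eq_of_mul_eq_one_right
  ext x
  refine Fin.cases ?_ (fun i => ?_) x
  · simp [Equiv.Perm.mul_apply, Equiv.Perm.decomposeFin_symm_apply_zero]
  · simp [Equiv.Perm.mul_apply, Equiv.Perm.decomposeFin_symm_apply_succ]

theorem decomposeFin_inv_one {m : ℕ} (e : Equiv.Perm (Fin (m + 1))) :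
    (Equiv.Perm.decomposeFin.symm (1, e))⁻¹ =
      Equiv.Perm.decomposeFin.symm ((e⁻¹ 0).succ, e⁻¹) := by
  apply inv_eq_of_mul_eq_one_right
  ext x
  refine Fin.cases ?_ (fun i => ?_) x
  · simp [Equiv.Perm.mul_apply, Equiv.Perm.decomposeFin_symm_apply_zero,
      Equiv.Perm.decomposeFin_symm_apply_succ, Equiv.swap_apply_right]
  · by_cases hi : i = 0
    · subst hi
      simp [Equiv.Perm.mul_apply, Equiv.Perm.decomposeFin_symm_apply_zero,
        Equiv.Perm.decomposeFin_symm_apply_succ, Equiv.swap_apply_right,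
        Fin.succ_zero_eq_one]
    · have h1 : (e⁻¹ i).succ ≠ 0 := Fin.succ_ne_zero _
      have h2 : (e⁻¹ i).succ ≠ (e⁻¹ 0).succ := by
        simp only [ne_eq, Fin.succ_inj]
        exact fun h => hi (e⁻¹.injective h)
      have h3 : (i.succ : Fin (m + 2)) ≠ 0 := Fin.succ_ne_zero _
      have h4 : (i.succ : Fin (m + 2)) ≠ 1 := by
        rw [← Fin.succ_zero_eq_one]
        simp only [ne_eq, Fin.succ_inj]
        exact hi
      have h5 : e (e⁻¹ i) = i := Equiv.apply_symm_apply e i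
      rw [Equiv.Perm.mul_apply, Equiv.Perm.decomposeFin_symm_apply_succ,
        Equiv.swap_apply_of_ne_of_ne h1 h2, Equiv.Perm.decomposeFin_symm_apply_succ,
        h5, Equiv.swap_apply_of_ne_of_ne h3 h4,
        Equiv.Perm.one_apply]

end Expand
section Expand2
open Equiv Equiv.Perm

theorem hookComp_one (b : ℕ) (k : Fin (b + 1)) : hookComp 1 b k = 1 := by
  simp [hookComp]

set_option maxHeartbeats 1000000 in
theorem Jflag_hook_expand (N a b : ℕ) (n : Fin (b + 2) → ℕ) :
    Jflag N (b + 2) (hookComp a (b + 1)) n =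
      esymFlag N (n 0) a * Jflag N (b + 1) (hookComp 1 b) (fun k => n k.succ) -
        Jflag N (b + 1) (hookComp (a + 1) b) (Fin.cons (n 0) fun k => n k.succ.succ) := by
  classical
  set M : Fin (b + 2) → Fin (b + 2) → FreeAlgebra ℤ (Fin N) :=
    fun k j => esymFlagZ N (n k) (hookComp a (b + 1) k + ((j : ℕ) : ℤ) - ((k : ℕ) : ℤ))
    with hM
  have hJ : Jflag N (b + 2) (hookComp a (b + 1)) n =
      ∑ σ : Equiv.Perm (Fin (b + 2)), ((Equiv.Perm.sign σ : ℤˣ) : ℤ) •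
        (List.ofFn fun k => M k (σ⁻¹ k)).prod := by
    rw [Jflag, ← Equiv.sum_comp (Equiv.inv (Equiv.Perm (Fin (b + 2))))
      (fun σ => ((Equiv.Perm.sign σ : ℤˣ) : ℤ) • (List.ofFn fun k => M k (σ⁻¹ k)).prod)]
    refine Finset.sum_congr rfl fun σ _ => ?_
    simp only [Equiv.inv_apply, hM, inv_inv, map_inv]
    congr 1
    · simp
  rw [hJ, ← Equiv.sum_comp Equiv.Perm.decomposeFin.symm
    (fun σ => ((Equiv.Perm.sign σ : ℤˣ) : ℤ) • (List.ofFn fun k => M k (σ⁻¹ k)).prod),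
    Fintype.sum_prod_type, Fin.sum_univ_succ, Fin.sum_univ_succ]
  have htail : ∀ (i : Fin b) (y : Equiv.Perm (Fin (b + 1))),
      ((Equiv.Perm.sign (Equiv.Perm.decomposeFin.symm (i.succ.succ, y)) : ℤˣ) : ℤ) •
        (List.ofFn fun k => M k ((Equiv.Perm.decomposeFin.symm (i.succ.succ, y))⁻¹ k)).prod
        = 0 := by
    intro i y
    have hτ : (Equiv.Perm.decomposeFin.symm (i.succ.succ, y))⁻¹ i.succ.succ = 0 := by
      conv_lhs => rw [show (i.succ.succ : Fin (b + 2)) =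
        Equiv.Perm.decomposeFin.symm (i.succ.succ, y) 0 from
          (Equiv.Perm.decomposeFin_symm_apply_zero _ _).symm]
      exact Equiv.symm_apply_apply _ _
    have hmem : (0 : FreeAlgebra ℤ (Fin N)) ∈
        List.ofFn fun k => M k ((Equiv.Perm.decomposeFin.symm (i.succ.succ, y))⁻¹ k) := by
      refine List.mem_ofFn.mpr ⟨i.succ.succ, ?_⟩
      show M i.succ.succ ((Equiv.Perm.decomposeFin.symm (i.succ.succ, y))⁻¹ i.succ.succ) = 0
      rw [hτ, hM]
      simp only [hookComp, Fin.val_succ, Fin.val_zero]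
      rw [if_neg (by omega)]
      rw [esymFlagZ, if_neg]
      push_cast
      omega
    rw [List.prod_eq_zero hmem, smul_zero]
  have hsign0 : ∀ y : Equiv.Perm (Fin (b + 1)),
      ((Equiv.Perm.sign (Equiv.Perm.decomposeFin.symm (0, y)) : ℤˣ) : ℤ) =
        ((Equiv.Perm.sign y : ℤˣ) : ℤ) := by
    intro y
    rw [Equiv.Perm.decomposeFin.symm_sign]
    simp
  have hsign1 : ∀ y : Equiv.Perm (Fin (b + 1)),
      ((Equiv.Perm.sign
          (Equiv.Perm.decomposeFin.symm ((0 : Fin (b + 1)).succ, y)) : ℤˣ) : ℤ) =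
        -((Equiv.Perm.sign y : ℤˣ) : ℤ) := by
    intro y
    rw [Equiv.Perm.decomposeFin.symm_sign]
    simp [Fin.succ_ne_zero]
  have key0 : ∀ z : Equiv.Perm (Fin (b + 1)),
      ((Equiv.Perm.sign z : ℤˣ) : ℤ) •
        (List.ofFn fun k => M k (Equiv.Perm.decomposeFin.symm (0, z) k)).prod =
      esymFlag N (n 0) a * (((Equiv.Perm.sign z : ℤˣ) : ℤ) •
        (List.ofFn fun k : Fin (b + 1) =>
          esymFlagZ N ((fun k : Fin (b+1) => n k.succ) k)
            (hookComp 1 b k + ((z k : ℕ) : ℤ) - ((k : ℕ) : ℤ))).prod) := by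
    intro z
    rw [List.ofFn_succ, List.prod_cons]
    have hhead : M 0 (Equiv.Perm.decomposeFin.symm (0, z) 0) = esymFlag N (n 0) a := by
      rw [Equiv.Perm.decomposeFin_symm_apply_zero, hM]
      simp only [hookComp, Fin.val_zero, if_pos rfl]
      norm_num [esymFlagZ]
    have htailf : ∀ k : Fin (b + 1),
        M k.succ (Equiv.Perm.decomposeFin.symm (0, z) k.succ) =
          esymFlagZ N (n k.succ) (hookComp 1 b k + ((z k : ℕ) : ℤ) - ((k : ℕ) : ℤ)) := by
      intro k
      rw [Equiv.Perm.decomposeFin_symm_apply_succ]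
      simp only [Equiv.swap_self, Equiv.refl_apply, hM]
      rw [hookComp_one]
      congr 1
      simp only [hookComp, Fin.val_succ, if_neg (Nat.succ_ne_zero _)]
      push_cast
      ring
    rw [hhead]
    simp only [htailf]
    rw [mul_smul_comm]
  have key1 : ∀ z : Equiv.Perm (Fin (b + 1)),
      (-((Equiv.Perm.sign z : ℤˣ) : ℤ)) •
        (List.ofFn fun k => M k (Equiv.Perm.decomposeFin.symm ((z 0).succ, z) k)).prod =
      -(((Equiv.Perm.sign z : ℤˣ) : ℤ) •
        (List.ofFn fun k : Fin (b + 1) =>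
          esymFlagZ N ((Fin.cons (n 0) (fun k : Fin b => n k.succ.succ) : Fin (b+1) → ℕ) k)
            (hookComp (a + 1) b k + ((z k : ℕ) : ℤ) - ((k : ℕ) : ℤ))).prod) := by
    intro z
    simp only [List.ofFn_succ, List.prod_cons]
    have hhead : M 0 (Equiv.Perm.decomposeFin.symm ((z 0).succ, z) 0) =
        esymFlagZ N ((Fin.cons (n 0) (fun k : Fin b => n k.succ.succ) : Fin (b+1) → ℕ) (0 : Fin (b+1)))
          (hookComp (a + 1) b 0 + ((z (0 : Fin (b+1)) : ℕ) : ℤ) - (((0 : Fin (b+1)) : ℕ) : ℤ)) := by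
      rw [Equiv.Perm.decomposeFin_symm_apply_zero, hM, Fin.cons_zero]
      simp only [hookComp, Fin.val_zero, if_pos rfl, Fin.val_succ]
      congr 1
      push_cast
      ring
    have hone : M (0 : Fin (b+1)).succ
        (Equiv.Perm.decomposeFin.symm ((z 0).succ, z) (0 : Fin (b+1)).succ) = 1 := by
      rw [Equiv.Perm.decomposeFin_symm_apply_succ, Equiv.swap_apply_right, hM]
      simp only [hookComp, Fin.val_succ, Fin.val_zero, if_neg (Nat.succ_ne_zero _)]
      norm_num [esymFlagZ, esymFlag_zero]
    have htailf : ∀ k : Fin b,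
        M k.succ.succ (Equiv.Perm.decomposeFin.symm ((z 0).succ, z) k.succ.succ) =
          esymFlagZ N ((Fin.cons (n 0) (fun k : Fin b => n k.succ.succ) : Fin (b+1) → ℕ) k.succ)
            (hookComp (a + 1) b k.succ + ((z k.succ : ℕ) : ℤ) - ((k.succ : ℕ) : ℤ)) := by
      intro k
      have h1 : (z k.succ).succ ≠ (0 : Fin (b + 2)) := Fin.succ_ne_zero _
      have h2 : (z k.succ).succ ≠ (z 0).succ := by
        simp only [ne_eq, Fin.succ_inj]
        exact fun h => (Fin.succ_ne_zero k) (z.injective h)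
      rw [Equiv.Perm.decomposeFin_symm_apply_succ,
        Equiv.swap_apply_of_ne_of_ne h1 h2, hM, Fin.cons_succ]
      simp only [hookComp, Fin.val_succ, if_neg (Nat.succ_ne_zero _)]
      congr 1
      push_cast
      ring
    rw [hhead, hone, one_mul]
    simp only [htailf]
    simp only [neg_smul]
  have h0 : (∑ y : Equiv.Perm (Fin (b + 1)),
      ((Equiv.Perm.sign (Equiv.Perm.decomposeFin.symm (0, y)) : ℤˣ) : ℤ) •
        (List.ofFn fun k => M k ((Equiv.Perm.decomposeFin.symm (0, y))⁻¹ k)).prod)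
      = esymFlag N (n 0) a * Jflag N (b + 1) (hookComp 1 b) (fun k => n k.succ) := by
    rw [Jflag, Finset.mul_sum]
    refine Fintype.sum_equiv (Equiv.inv (Equiv.Perm (Fin (b + 1)))) _ _ fun y => ?_
    simp only [Equiv.inv_apply]
    rw [hsign0, decomposeFin_inv_zero, show ((Equiv.Perm.sign y : ℤˣ) : ℤ) =
      ((Equiv.Perm.sign y⁻¹ : ℤˣ) : ℤ) by simp]
    exact key0 y⁻¹
  have h1 : (∑ y : Equiv.Perm (Fin (b + 1)),
      ((Equiv.Perm.sign (Equiv.Perm.decomposeFin.symm ((0 : Fin (b+1)).succ, y)) : ℤˣ) : ℤ) •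
        (List.ofFn fun k =>
          M k ((Equiv.Perm.decomposeFin.symm ((0 : Fin (b+1)).succ, y))⁻¹ k)).prod)
      = - Jflag N (b + 1) (hookComp (a + 1) b) (Fin.cons (n 0) fun k => n k.succ.succ) := by
    rw [Jflag, ← Finset.sum_neg_distrib]
    refine Fintype.sum_equiv (Equiv.inv (Equiv.Perm (Fin (b + 1)))) _ _ fun y => ?_
    simp only [Equiv.inv_apply]
    rw [hsign1, Fin.succ_zero_eq_one, decomposeFin_inv_one,
      show ((Equiv.Perm.sign y : ℤˣ) : ℤ) = ((Equiv.Perm.sign y⁻¹ : ℤˣ) : ℤ) by simp]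
    exact key1 y⁻¹
  rw [h0, h1]
  rw [Finset.sum_congr rfl fun i _ => Finset.sum_congr rfl fun y _ => htail i y]
  simp only [Finset.sum_const_zero, add_zero]
  abel

end Expand2
section Step
variable {N : ℕ}

theorem strictMono_fin_one {α : Type*} [Preorder α] (g : Fin 1 → α) : StrictMono g :=
  fun i j h => ((lt_irrefl j) (Subsingleton.elim i j ▸ h)).elim

theorem strictMono_cons {m : ℕ} {α : Type*} [Preorder α] {x : α} {g : Fin m → α}
    (hg : StrictMono g) (hx : ∀ j, x < g j) : StrictMono (Fin.cons x g) := by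
  intro i j hij
  induction j using Fin.cases with
  | zero => exact absurd hij (by simp)
  | succ j' =>
    induction i using Fin.cases with
    | zero =>
      rw [Fin.cons_zero, Fin.cons_succ]
      exact hx j'
    | succ i' =>
      rw [Fin.cons_succ, Fin.cons_succ]
      exact hg (Fin.succ_lt_succ_iff.mp hij)

theorem ofFn_cons {m : ℕ} {α : Type*} (x : α) (g : Fin m → α) :
    List.ofFn (Fin.cons x g) = x :: List.ofFn g := by
  rw [List.ofFn_succ]
  simp

theorem ofFn_fin_one_reverse (p : Fin 1 → Fin N) (l : List (Fin N)) :
    (List.ofFn p).reverse ++ l = p 0 :: l := by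
  simp [List.ofFn_succ]

theorem reverse_ofFn_rev {m : ℕ} (f : Fin m → Fin N) :
    (List.ofFn (fun i => f i.rev)).reverse = List.ofFn f := by
  rw [reverse_ofFn]
  simp [Fin.rev_rev]

theorem reverse_ofFn_succ_big {m : ℕ} (r : Fin (m + 1) → Fin N) :
    (List.ofFn r).reverse = List.ofFn (fun i : Fin m => r i.rev.succ) ++ [r 0] := by
  rw [reverse_ofFn, List.ofFn_succ']
  simp [Fin.rev_castSucc, List.concat_eq_append, Fin.rev_last]
set_option maxHeartbeats 1000000 in
theorem hook_step (N m b : ℕ) (n : Fin (b + 2) → ℕ) (hn : Monotone n) :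
    pr N (esymFlag N (n 0) (m + 1) * hookTarget N 1 b (fun k => n k.succ)) =
      pr N (hookTarget N (m + 1) (b + 1) n) +
        pr N (hookTarget N (m + 2) b
          (Fin.cons (n 0) (fun k : Fin b => n k.succ.succ) : Fin (b + 1) → ℕ)) := by
  classical
  -- notation for condition and word of the product side
  set n' : Fin (b + 1) → ℕ := (Fin.cons (n 0) (fun k : Fin b => n k.succ.succ)) with hn'
  have hprod : esymFlag N (n 0) (m + 1) * hookTarget N 1 b (fun k => n k.succ) =
      ∑ t : (Fin (m + 1) → Fin N) × ((Fin 1 → Fin N) × (Fin b → Fin N)),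
        if (StrictAnti t.1 ∧ ∀ i, (t.1 i : ℕ) < n 0) ∧
            (StrictMono t.2.1 ∧ StrictMono t.2.2 ∧ (∀ i j, t.2.1 i ≠ t.2.2 j) ∧
              (∀ (j : Fin b) (i : Fin 1), (i : ℕ) = 0 → t.2.1 i < t.2.2 j) ∧
              (∀ i, (t.2.1 i : ℕ) < n (0 : Fin (b + 1)).succ) ∧
              (∀ j : Fin b, (t.2.2 j : ℕ) < n j.succ.succ))
        then word N (List.ofFn t.1 ++ ((List.ofFn t.2.1).reverse ++ List.ofFn t.2.2))
        else 0 := by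
    rw [esymFlag, hookTarget, Finset.sum_mul_sum, ← Fintype.sum_prod_type']
    refine Finset.sum_congr rfl fun t _ => ?_
    rw [ite_zero_mul_ite_zero, ← word_append]
  have hRHS : hookTarget N (m + 1) (b + 1) n + hookTarget N (m + 2) b n' =
      ∑ k : ((Fin (m + 1) → Fin N) × (Fin (b + 1) → Fin N)) ⊕
            ((Fin (m + 2) → Fin N) × (Fin b → Fin N)),
        if (Sum.elim
              (fun q => StrictMono q.1 ∧ StrictMono q.2 ∧ (∀ i j, q.1 i ≠ q.2 j) ∧
                (∀ (j : Fin (b + 1)) (i : Fin (m + 1)), (i : ℕ) = 0 → q.1 i < q.2 j) ∧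
                (∀ i, (q.1 i : ℕ) < n 0) ∧ (∀ j : Fin (b + 1), (q.2 j : ℕ) < n j.succ))
              (fun r => StrictMono r.1 ∧ StrictMono r.2 ∧ (∀ i j, r.1 i ≠ r.2 j) ∧
                (∀ (j : Fin b) (i : Fin (m + 2)), (i : ℕ) = 0 → r.1 i < r.2 j) ∧
                (∀ i, (r.1 i : ℕ) < n' 0) ∧ (∀ j : Fin b, (r.2 j : ℕ) < n' j.succ)) k)
        then word N (Sum.elim
            (fun q : (Fin (m + 1) → Fin N) × (Fin (b + 1) → Fin N) =>
              (List.ofFn q.1).reverse ++ List.ofFn q.2)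
            (fun r : (Fin (m + 2) → Fin N) × (Fin b → Fin N) =>
              (List.ofFn r.1).reverse ++ List.ofFn r.2) k)
        else 0 := by
    rw [Fintype.sum_sum_type, hookTarget, hookTarget]
    congr 1
    · exact Finset.sum_congr rfl fun p _ => by simp only [Sum.elim_inl]; congr
    · exact Finset.sum_congr rfl fun p _ => by simp only [Sum.elim_inr]; congr
  rw [hprod, ← map_add, hRHS]
  refine pr_sum_eq_of_bij _ _ _ _
    (fun t => if (t.1 (Fin.last m) : Fin N) < t.2.1 0
      then Sum.inl ((fun i => t.1 i.rev), Fin.cons (t.2.1 0) t.2.2)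
      else Sum.inr (Fin.cons (t.2.1 0) (fun i => t.1 i.rev), t.2.2))
    (Sum.elim
      (fun q => ((fun i => q.1 i.rev), (fun _ => q.2 0), (fun j => q.2 j.succ)))
      (fun r => ((fun i => r.1 i.rev.succ), (fun _ => r.1 0), r.2)))
    ?_ ?_ ?_ ?_
  · -- forward: conditions and word
    rintro ⟨f, p1, g⟩ ⟨⟨hfA, hfF⟩, hp1M, hgM, hdisj, hcorner, hp1F, hgF⟩ hnd
    dsimp only at hfA hfF hp1M hgM hdisj hcorner hp1F hgF hnd ⊢
    have hwshape : List.ofFn f ++ ((List.ofFn p1).reverse ++ List.ofFn g) =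
        List.ofFn f ++ (p1 0 :: List.ofFn g) := by rw [ofFn_fin_one_reverse]
    rw [hwshape] at hnd
    set x := p1 0 with hx
    have hnd2 := List.disjoint_of_nodup_append hnd
    have hfx : ∀ i, f i ≠ x := fun i h =>
      hnd2 (List.mem_ofFn.mpr ⟨i, rfl⟩) (by rw [h]; exact List.mem_cons_self)
    have hfg : ∀ i j, f i ≠ g j := fun i j h =>
      hnd2 (List.mem_ofFn.mpr ⟨i, rfl⟩)
        (by rw [h]; exact List.mem_cons_of_mem _ (List.mem_ofFn.mpr ⟨j, rfl⟩))
    have hxg : ∀ j, x ≠ g j := by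
      have hnd3 := (List.nodup_append.mp hnd).2.1
      intro j h
      exact (List.nodup_cons.mp hnd3).1 (by rw [h]; exact List.mem_ofFn.mpr ⟨j, rfl⟩)
    have hxglt : ∀ j, x < g j := fun j => hcorner j 0 rfl
    have hflast : ∀ i, f (Fin.last m) ≤ f i := fun i => hfA.antitone (Fin.le_last i)
    by_cases hlt : f (Fin.last m) < x
    · rw [if_pos hlt]
      simp only [Sum.elim_inl]
      constructor
      · refine ⟨fun i j hij => hfA (Fin.rev_lt_rev.mpr hij), strictMono_cons hgM hxglt, ?_, ?_, ?_, ?_⟩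
        · intro i j
          refine Fin.cases ?_ (fun j' => ?_) j
          · rw [Fin.cons_zero]; exact hfx _
          · rw [Fin.cons_succ]; exact hfg _ _
        · intro j i hi
          have hi0 : i = 0 := Fin.ext hi
          subst hi0
          have h1 : f ((0 : Fin (m + 1)).rev) = f (Fin.last m) := by rw [Fin.rev_zero]
          rw [h1]
          refine Fin.cases ?_ (fun j' => ?_) j
          · rw [Fin.cons_zero]; exact hlt
          · rw [Fin.cons_succ]; exact lt_trans hlt (hxglt j')
        · exact fun i => hfF _
        · intro j
          refine Fin.cases ?_ (fun j' => ?_) j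
          · rw [Fin.cons_zero]; exact hp1F 0
          · rw [Fin.cons_succ]; exact hgF j'
      · rw [reverse_ofFn_rev, ofFn_cons, hwshape]
    · rw [if_neg hlt]
      simp only [Sum.elim_inr]
      have hxlt : x < f (Fin.last m) :=
        lt_of_le_of_ne (not_lt.mp hlt) (fun h => hfx _ h.symm)
      have hxf : ∀ i, x < f i := fun i => lt_of_lt_of_le hxlt (hflast i)
      constructor
      · refine ⟨strictMono_cons (fun i j hij => hfA (Fin.rev_lt_rev.mpr hij)) (fun j => hxf _),
          hgM, ?_, ?_, ?_, ?_⟩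
        · intro i j
          refine Fin.cases ?_ (fun i' => ?_) i
          · rw [Fin.cons_zero]; exact hxg _
          · rw [Fin.cons_succ]; exact hfg _ _
        · intro j i hi
          have hi0 : i = 0 := Fin.ext hi
          subst hi0
          rw [Fin.cons_zero]
          exact hxglt j
        · intro i
          refine Fin.cases ?_ (fun i' => ?_) i
          · rw [Fin.cons_zero, hn', Fin.cons_zero]
            exact lt_of_lt_of_le (Fin.lt_iff_val_lt_val.mp hxlt) (le_of_lt (hfF _))
          · rw [Fin.cons_succ, hn', Fin.cons_zero]
            exact hfF _
        · intro j
          rw [hn', Fin.cons_succ]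
          exact hgF j
      · rw [reverse_ofFn_succ_big]
        simp only [Fin.cons_succ, Fin.cons_zero, Fin.rev_rev]
        rw [hwshape, List.append_assoc, List.singleton_append]
  · -- backward: conditions and word
    rintro (⟨q1, q2⟩ | ⟨r1, r2⟩)
    · rintro ⟨hq1M, hq2M, hdisj, hcorner, hq1F, hq2F⟩ hnd
      dsimp only at hq1M hq2M hdisj hcorner hq1F hq2F hnd ⊢
      simp only [Sum.elim_inl]
      constructor
      · exact ⟨⟨fun i j hij => hq1M (Fin.rev_lt_rev.mpr hij), fun i => hq1F _⟩,
          strictMono_fin_one _,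
          fun i j hij => hq2M (Fin.succ_lt_succ_iff.mpr hij),
          fun i j => ne_of_lt (hq2M (Fin.succ_pos j)),
          fun j i _ => hq2M (Fin.succ_pos j),
          fun i => hq2F 0,
          fun j => hq2F j.succ⟩
      · rw [ofFn_fin_one_reverse, reverse_ofFn, List.ofFn_succ (f := q2)]
    · rintro ⟨hr1M, hr2M, hdisj, hcorner, hr1F, hr2F⟩ hnd
      dsimp only at hr1M hr2M hdisj hcorner hr1F hr2F hnd ⊢
      simp only [Sum.elim_inr]
      constructor
      · refine ⟨⟨fun i j hij => hr1M (Fin.succ_lt_succ_iff.mpr (Fin.rev_lt_rev.mpr hij)),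
            fun i => ?_⟩,
          strictMono_fin_one _, hr2M,
          fun i j => hdisj 0 j,
          fun j i _ => hcorner j 0 rfl,
          fun i => ?_, fun j => ?_⟩
        · have := hr1F i.rev.succ
          rwa [hn', Fin.cons_zero] at this
        · have h0 : (r1 0 : ℕ) < n' 0 := hr1F 0
          rw [hn', Fin.cons_zero] at h0
          exact lt_of_lt_of_le h0 (hn (Fin.zero_le _))
        · have := hr2F j
          rwa [hn', Fin.cons_succ] at this
      · rw [ofFn_fin_one_reverse, reverse_ofFn_succ_big, List.append_assoc, List.singleton_append]
  · -- Ψ ∘ Φ = id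
    rintro ⟨f, p1, g⟩ ⟨⟨hfA, hfF⟩, hp1M, hgM, hdisj, hcorner, hp1F, hgF⟩ hnd
    dsimp only at hfA hfF hp1M hgM hdisj hcorner hp1F hgF hnd ⊢
    by_cases hlt : (f (Fin.last m) : Fin N) < p1 0
    · rw [if_pos hlt]
      simp only [Sum.elim_inl]
      refine Prod.ext ?_ (Prod.ext ?_ ?_)
      · funext i; simp [Fin.rev_rev]
      · funext i
        have : i = 0 := Subsingleton.elim _ _
        rw [this, Fin.cons_zero]
      · funext j; simp [Fin.cons_succ]
    · rw [if_neg hlt]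
      simp only [Sum.elim_inr]
      refine Prod.ext ?_ (Prod.ext ?_ rfl)
      · funext i; simp [Fin.cons_succ, Fin.rev_rev]
      · funext i
        have : i = 0 := Subsingleton.elim _ _
        rw [this, Fin.cons_zero]
  · -- Φ ∘ Ψ = id
    rintro (⟨q1, q2⟩ | ⟨r1, r2⟩)
    · rintro ⟨hq1M, hq2M, hdisj, hcorner, hq1F, hq2F⟩ hnd
      dsimp only at hq1M hq2M hdisj hcorner hq1F hq2F hnd ⊢
      simp only [Sum.elim_inl]
      have hj : (fun i : Fin (m + 1) => q1 i.rev) (Fin.last m) < q2 0 := by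
        show q1 (Fin.last m).rev < q2 0
        rw [Fin.rev_last]
        exact hcorner 0 0 rfl
      simp only [show q1 (Fin.last m).rev < q2 0 from hj, ↓reduceIte]
      congr 1
      refine Prod.ext ?_ ?_
      · funext i; simp [Fin.rev_rev]
      · exact Fin.cons_self_tail q2
    · rintro ⟨hr1M, hr2M, hdisj, hcorner, hr1F, hr2F⟩ hnd
      dsimp only at hr1M hr2M hdisj hcorner hr1F hr2F hnd ⊢
      simp only [Sum.elim_inr]
      have hj : ¬ ((fun i : Fin (m + 1) => r1 i.rev.succ) (Fin.last m) < r1 0) := by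
        show ¬ r1 (Fin.last m).rev.succ < r1 0
        rw [Fin.rev_last]
        exact not_lt.mpr (le_of_lt (hr1M (Fin.succ_pos 0)))
      simp only [show ¬ r1 (Fin.last m).rev.succ < r1 0 from hj, ↓reduceIte]
      congr 1
      refine Prod.ext ?_ rfl
      funext i
      refine Fin.cases ?_ (fun i' => ?_) i
      · simp
      · simp [Fin.rev_rev]
theorem hook_main (N : ℕ) : ∀ (b a : ℕ) (n : Fin (b + 1) → ℕ), 0 < a → Monotone n →
    pr N (Jflag N (b + 1) (hookComp a b) n) = pr N (hookTarget N a b n) := by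
  intro b
  induction b with
  | zero => intro a n _ _; exact hook_base N a n
  | succ b ih =>
    intro a n ha hn
    obtain ⟨m, rfl⟩ : ∃ m, a = m + 1 := ⟨a - 1, (Nat.succ_pred_eq_of_pos ha).symm⟩
    have hn1 : Monotone (fun k : Fin (b + 1) => n k.succ) := by
      intro i j hij
      exact hn (Fin.succ_le_succ_iff.mpr hij)
    have hn2 : Monotone (Fin.cons (n 0) (fun k : Fin b => n k.succ.succ) : Fin (b+1) → ℕ) := by
      intro i j hij
      induction j using Fin.cases with
      | zero =>
        have : i = 0 := le_antisymm hij (Fin.zero_le i)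
        rw [this]
      | succ j' =>
        induction i using Fin.cases with
        | zero =>
          rw [Fin.cons_zero, Fin.cons_succ]
          exact hn (Fin.zero_le _)
        | succ i' =>
          rw [Fin.cons_succ, Fin.cons_succ]
          exact hn (Fin.succ_le_succ_iff.mpr (Fin.succ_le_succ_iff.mpr (Fin.succ_le_succ_iff.mp hij)))
    rw [Jflag_hook_expand, map_sub, map_mul,
      ih 1 (fun k => n k.succ) one_pos hn1,
      ih (m + 2) (Fin.cons (n 0) (fun k : Fin b => n k.succ.succ)) (by omega) hn2,
      ← map_mul, hook_step N m b n hn]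
    abel

end Step


/-- For the hook shape `λ = (a,1^b)` (`a ≥ 1`) and a flag `n₁ ≤ n₂ ≤ ⋯ ≤ n_{b+1}`,
modulo `I_RKst` the flagged noncommutative Schur function `J_λ^n` equals the sum of the
column reading words `creading(T)` over all semistandard Young tableaux `T` of the
conjugate shape `λ' = (b+1, 1^{a-1})` with no repeated letter whose column-`c` entries lie
in `[n_c]`.  Such a tableau is recorded as a pair `p = (p₁, p₂)` where `p₁` lists the
first column top-to-bottom (strictly increasing, length `a`) and `p₂` lists the rest of
the first row left-to-right (strictly increasing, length `b`, each entry larger than the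
corner `p₁ 0` and disjoint from the first column); `creading(T)` is the first column read
bottom-to-top followed by `p₂`.  In particular (taking all `n_c = N`), `𝔍_{(a,1^b)'}(u)`
is a positive sum of monomials in `U/I_RKst`. -/
theorem Jflag_hook (N a b : ℕ) (ha : 0 < a) (n : Fin (b + 1) → ℕ) (hn : Monotone n) :
    (pr N (Jflag N (b + 1) (hookComp a b) n) =
      pr N (∑ p : (Fin a → Fin N) × (Fin b → Fin N),
        if StrictMono p.1 ∧ StrictMono p.2 ∧ (∀ i j, p.1 i ≠ p.2 j) ∧
            (∀ j : Fin b, p.1 ⟨0, ha⟩ < p.2 j) ∧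
            (∀ i, (p.1 i : ℕ) < n ⟨0, Nat.succ_pos b⟩) ∧
            (∀ j : Fin b, (p.2 j : ℕ) < n ⟨(j : ℕ) + 1, Nat.succ_lt_succ j.isLt⟩)
        then word N ((List.ofFn p.1).reverse ++ List.ofFn p.2) else 0)) ∧
    ∃ m : Multiset (List (Fin N)),
      pr N (Jflag N (b + 1) (hookComp a b) (fun _ => N)) =
        pr N ((m.map (word N)).sum) := by
  classical
  have hTeq : ∀ (nn : Fin (b + 1) → ℕ), hookTarget N a b nn =
      ∑ p : (Fin a → Fin N) × (Fin b → Fin N),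
        if StrictMono p.1 ∧ StrictMono p.2 ∧ (∀ i j, p.1 i ≠ p.2 j) ∧
            (∀ j : Fin b, p.1 ⟨0, ha⟩ < p.2 j) ∧
            (∀ i, (p.1 i : ℕ) < nn ⟨0, Nat.succ_pos b⟩) ∧
            (∀ j : Fin b, (p.2 j : ℕ) < nn ⟨(j : ℕ) + 1, Nat.succ_lt_succ j.isLt⟩)
        then word N ((List.ofFn p.1).reverse ++ List.ofFn p.2) else 0 := by
    intro nn
    rw [hookTarget]
    refine Finset.sum_congr rfl fun p _ => ?_
    refine if_congr ?_ rfl rfl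
    constructor
    · rintro ⟨h1, h2, h3, h4, h5, h6⟩
      exact ⟨h1, h2, h3, fun j => h4 j ⟨0, ha⟩ rfl, fun i => h5 i, fun j => h6 j⟩
    · rintro ⟨h1, h2, h3, h4, h5, h6⟩
      refine ⟨h1, h2, h3, fun j i hi => ?_, fun i => h5 i, fun j => h6 j⟩
      rw [show i = ⟨0, ha⟩ from Fin.ext hi]
      exact h4 j
  constructor
  · rw [hook_main N b a n ha hn, hTeq]
  · refine ⟨(Finset.univ.filter fun p : (Fin a → Fin N) × (Fin b → Fin N) =>
        StrictMono p.1 ∧ StrictMono p.2 ∧ (∀ i j, p.1 i ≠ p.2 j) ∧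
          (∀ (j : Fin b) (i : Fin a), (i : ℕ) = 0 → p.1 i < p.2 j) ∧
          (∀ i, (p.1 i : ℕ) < (fun _ => N) (0 : Fin (b + 1))) ∧
          (∀ j : Fin b, (p.2 j : ℕ) < (fun _ => N) (j.succ : Fin (b + 1)))).val.map
        (fun p : (Fin a → Fin N) × (Fin b → Fin N) =>
          (List.ofFn p.1).reverse ++ List.ofFn p.2), ?_⟩
    rw [hook_main N b a (fun _ => N) ha monotone_const]
    congr 1
    rw [Multiset.map_map, hookTarget, ← Finset.sum_filter,
      Finset.sum_eq_multiset_sum]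
    rfl


end
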